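/- For every nonempty composition α, the extended chromatic symmetric function of the weighted path with weights α expands into power sum symmetric functions as X_{(P_{ℓ(α)},α)} = Σ_{β ≽ α} (−1)^{ℓ(α)−ℓ(β)} p_{β̃}, the sum over all coarsenings β of α. -/

import Mathlib

open scoped BigOperators
open scoped Classical

namespace CSF

/-! ## Extended chromatic symmetric functions of multigraphs

A (multi)graph on a vertex type `V` is given by a multiset of edges `E : Multiset (Sym2 V)`
(loops and multiple edges allowed).  Colours are positive integers `ℕ+`, and the
(extended) chromatic symmetric function lives in `MvPowerSeries ℕ+ ℚ`, the power series
in the commuting variables `x_j`, `j : ℕ+`. -/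

/-- A proper colouring of the multigraph with edge multiset `E`. -/
def Proper {V C : Type*} (E : Multiset (Sym2 V)) (κ : V → C) : Prop :=
  ∀ u v : V, s(u, v) ∈ E → κ u ≠ κ v

/-- The monomial `∏_v x_{κ(v)}^{w(v)}`, recorded as its exponent vector. -/
noncomputable def mon {V : Type*} [Fintype V] (w : V → ℕ) (κ : V → ℕ+) : ℕ+ →₀ ℕ :=
  ∑ v, Finsupp.single (κ v) (w v)

/-- The extended chromatic symmetric function `X_{(G,w)}` of the weighted graph with
edge multiset `E` and vertex weights `w`: the coefficient of a monomial `m` is the number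
of proper colourings `κ` with `∏_v x_{κ(v)}^{w(v)} = x^m`. -/
noncomputable def X {V : Type*} [Fintype V] (E : Multiset (Sym2 V)) (w : V → ℕ) :
    MvPowerSeries ℕ+ ℚ :=
  fun m => (Nat.card {κ : V → ℕ+ // Proper E κ ∧ mon w κ = m} : ℚ)

/-- The chromatic polynomial `χ_G(k)`: the number of proper colourings with `k` colours. -/
noncomputable def chrom {V : Type*} [Fintype V] (E : Multiset (Sym2 V)) (k : ℕ) : ℕ :=
  Nat.card {κ : V → Fin k // Proper E κ}

/-- Edge multiset of the labelled path `P_n` on `Fin n`: edges `v_i v_{i+1}`. -/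
def pathE (n : ℕ) : Multiset (Sym2 (Fin n)) :=
  ((Finset.univ : Finset (Fin n × Fin n)).filter
    (fun p => (p.1 : ℕ) + 1 = (p.2 : ℕ))).val.map (fun p => s(p.1, p.2))

/-- Edge multiset of the labelled star `S_n` on `Fin n`: edges `v_i v_n`, `i ∈ [n-1]`. -/
def starE (n : ℕ) : Multiset (Sym2 (Fin n)) :=
  ((Finset.univ : Finset (Fin n × Fin n)).filter
    (fun p => (p.1 : ℕ) + 1 < n ∧ (p.2 : ℕ) + 1 = n)).val.map (fun p => s(p.1, p.2))

/-- Edge multiset of a disjoint union of graphs on `Fin (m i)`, `i : Fin k`. -/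
noncomputable def unionE {k : ℕ} {m : Fin k → ℕ}
    (Es : ∀ i, Multiset (Sym2 (Fin (m i)))) : Multiset (Sym2 (Σ i, Fin (m i))) :=
  ∑ i, (Es i).map (Sym2.map (fun v => ⟨i, v⟩))

/-- Extended chromatic symmetric function of a disjoint union of weighted graphs. -/
noncomputable def Xunion {k : ℕ} {m : Fin k → ℕ}
    (Es : ∀ i, Multiset (Sym2 (Fin (m i)))) (ws : ∀ i, Fin (m i) → ℕ) :
    MvPowerSeries ℕ+ ℚ :=
  X (unionE Es) (fun v => ws v.1 v.2)

/-- `X_{P_l}`: chromatic symmetric function of the disjoint union of unweighted paths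
`P_{l_1} ∪ ⋯ ∪ P_{l_k}`. -/
noncomputable def XPaths (l : List ℕ) : MvPowerSeries ℕ+ ℚ :=
  Xunion (m := fun i : Fin l.length => l.get i) (fun i => pathE (l.get i)) (fun _ _ => 1)

/-- `X_{S_l}`: chromatic symmetric function of a disjoint union of unweighted stars. -/
noncomputable def XStars (l : List ℕ) : MvPowerSeries ℕ+ ℚ :=
  Xunion (m := fun i : Fin l.length => l.get i) (fun i => starE (l.get i)) (fun _ _ => 1)

/-- `X_{(P_{ℓ(α)}, α)}`: the extended chromatic symmetric function of the path on
`ℓ(α)` vertices whose `i`-th vertex has weight `α_i`. -/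
noncomputable def Xwpath (α : List ℕ) : MvPowerSeries ℕ+ ℚ :=
  X (pathE α.length) (fun i => α.get i)

/-! ## Symmetric functions -/

/-- The power sum symmetric function `p_i = ∑_j x_j^i`. -/
noncomputable def pS (i : ℕ) : MvPowerSeries ℕ+ ℚ :=
  fun m => if ∃ j : ℕ+, m = Finsupp.single j i then 1 else 0

/-- The complete homogeneous symmetric function `h_i`. -/
noncomputable def hS (i : ℕ) : MvPowerSeries ℕ+ ℚ :=
  fun m => if (m.sum fun _ k => k) = i then 1 else 0

/-- The elementary symmetric function `e_i`. -/
noncomputable def eS (i : ℕ) : MvPowerSeries ℕ+ ℚ :=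
  fun m => if ((m.sum fun _ k => k) = i ∧ ∀ j, m j ≤ 1) then 1 else 0

/-- `p_λ = p_{λ_1} ⋯ p_{λ_k}`. -/
noncomputable def pProd (l : List ℕ) : MvPowerSeries ℕ+ ℚ := (l.map pS).prod
/-- `h_λ = h_{λ_1} ⋯ h_{λ_k}`. -/
noncomputable def hProd (l : List ℕ) : MvPowerSeries ℕ+ ℚ := (l.map hS).prod
/-- `e_λ = e_{λ_1} ⋯ e_{λ_k}`. -/
noncomputable def eProd (l : List ℕ) : MvPowerSeries ℕ+ ℚ := (l.map eS).prod

/-- The algebra `Sym` of symmetric functions, realized as the subalgebra of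
`MvPowerSeries ℕ+ ℚ` generated by the elementary symmetric functions. -/
noncomputable def SymAlg : Subalgebra ℚ (MvPowerSeries ℕ+ ℚ) :=
  Algebra.adjoin ℚ {f | ∃ i : ℕ, f = eS (i + 1)}

/-- Sort a list into weakly decreasing order (the underlying partition `α̃`). -/
def sortDesc (l : List ℕ) : List ℕ := List.insertionSort (· ≥ ·) l

/-- Partitions: weakly decreasing lists of positive integers. -/
abbrev PartL : Type := {l : List ℕ // l.Pairwise (· ≥ ·) ∧ ∀ x ∈ l, 0 < x}

/-! ## Compositions -/

/-- All coarsenings of a composition: lists obtained by summing adjacent blocks. -/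
def coarsenings : List ℕ → List (List ℕ)
  | [] => [[]]
  | a :: l =>
    (coarsenings l).map (fun β => a :: β) ++
      (coarsenings l).filterMap (fun β =>
        match β with
        | [] => none
        | b :: β' => some ((a + b) :: β'))

/-- The ribbon Schur function `r_α = ∑_{β ≽ α} (-1)^{ℓ(α) - ℓ(β)} h_{β̃}`. -/
noncomputable def ribbon (α : List ℕ) : MvPowerSeries ℕ+ ℚ :=
  ((coarsenings α).map fun β =>
    ((-1 : ℚ) ^ (α.length - β.length)) • hProd (sortDesc β)).sum

lemma sum_take_get_le (α : List ℕ) (b : Fin α.length) :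
    (α.take b).sum + α.get b ≤ α.sum := by
  have h1 : (α.take (b + 1)).sum = (α.take b).sum + α[b] := List.sum_take_succ α b b.isLt
  have h2 : (α.take (b + 1)).sum ≤ α.sum := by
    conv_rhs => rw [← List.take_append_drop (b + 1) α]
    rw [List.sum_append]
    exact Nat.le_add_right _ _
  simpa [List.get_eq_getElem, ← h1] using h2

/-- Shift a graph on `Fin m` by an offset `o` inside `Fin n`. -/
def shiftE {m n : ℕ} (o : ℕ) (h : o + m ≤ n) (E : Multiset (Sym2 (Fin m))) :
    Multiset (Sym2 (Fin n)) :=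
  E.map (Sym2.map (fun v : Fin m => (⟨o + (v : ℕ), by have := v.isLt; omega⟩ : Fin n)))

/-- The labelled graph `G_{α_1} | G_{α_2} | ⋯ | G_{α_k}` on `Fin (α₁ + ⋯ + α_k)`:
consecutive blocks of vertices carry the graphs `Gr (α_i)`. -/
noncomputable def concatE (α : List ℕ) (Gr : (k : ℕ) → Multiset (Sym2 (Fin k))) :
    Multiset (Sym2 (Fin α.sum)) :=
  ∑ b : Fin α.length,
    shiftE ((α.take b).sum) (sum_take_get_le α b) (Gr (α.get b))

/-- `set(α) = {α_1, α_1+α_2, …, α_1+⋯+α_{ℓ(α)-1}} ⊆ [n-1]`. -/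
def setC (α : List ℕ) : Finset ℕ :=
  ((List.range (α.length - 1)).map (fun j => (α.take (j + 1)).sum)).toFinset

/-- The labelled graph on `Fin n` whose edges are `v_i v_{i+1}` for `i ∈ S` (1-based). -/
def edgesFromSet (n : ℕ) (S : Finset ℕ) : Multiset (Sym2 (Fin n)) :=
  ((Finset.univ : Finset (Fin n × Fin n)).filter
    (fun p => (p.1 : ℕ) + 1 = (p.2 : ℕ) ∧ (p.2 : ℕ) ∈ S)).val.map (fun p => s(p.1, p.2))

/-- `γ = α^c`, the complement composition: the composition of `|α|` with
`set(γ) = [n-1] − set(α)`. -/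
def IsComplementOf (γ α : List ℕ) : Prop :=
  (∀ x ∈ γ, 0 < x) ∧ γ.sum = α.sum ∧ setC γ = Finset.Ioo 0 α.sum \ setC α

/-- Near concatenation `α ⊙ β` of compositions. -/
def nconcat : List ℕ → List ℕ → List ℕ
  | [], β => β
  | [a], [] => [a]
  | [a], b :: β => (a + b) :: β
  | a :: l, β => a :: nconcat l β

/-- `β^{⊙ i}`, the `i`-fold near concatenation of `β` with itself. -/
def npowOdot (β : List ℕ) : ℕ → List ℕ
  | 0 => []
  | i + 1 => nconcat (npowOdot β i) β

/-- Composition of compositions: `α ∘ β = β^{⊙α_1} · ⋯ · β^{⊙α_{ℓ(α)}}`. -/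
def compOp (α β : List ℕ) : List ℕ := (α.map (npowOdot β)).flatten

/-- The equivalence `α ∼ β`: `α` and `β` have `∘`-factorizations whose factors agree
up to reversal.  (`[1]` is a two-sided identity for `∘`, so the empty fold is harmless.) -/
def simRel (α β : List ℕ) : Prop :=
  ∃ L M : List (List ℕ),
    List.Forall₂ (fun γ δ => (γ ≠ [] ∧ ∀ x ∈ γ, 0 < x) ∧ (δ = γ ∨ δ = γ.reverse)) L M ∧
    α = L.foldr compOp [1] ∧ β = M.foldr compOp [1]

/-- A trivial factorization `α = β ∘ γ`. -/
def TrivialFac (β γ : List ℕ) : Prop :=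
  β = [1] ∨ γ = [1] ∨ (β.length = 1 ∧ γ.length = 1) ∨
    ((∀ x ∈ β, x = 1) ∧ ∀ x ∈ γ, x = 1)

/-- `L` is an irreducible factorization of `α`. -/
def IsIrreducibleFac (α : List ℕ) (L : List (List ℕ)) : Prop :=
  (∀ γ ∈ L, γ ≠ [] ∧ ∀ x ∈ γ, 0 < x) ∧
  α = L.foldr compOp [1] ∧
  (∀ i : ℕ, ∀ h : i + 1 < L.length,
    ¬ TrivialFac (L.get ⟨i, by omega⟩) (L.get ⟨i + 1, h⟩)) ∧
  (∀ γ ∈ L, ∀ δ ε : List ℕ, δ ≠ [] → (∀ x ∈ δ, 0 < x) → ε ≠ [] → (∀ x ∈ ε, 0 < x) →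
    γ = compOp δ ε → TrivialFac δ ε)

/-- All compositions of `n` (lists of positive integers with sum `n`). -/
def comps : ℕ → List (List ℕ)
  | 0 => [[]]
  | n + 1 => (List.range (n + 1)).attach.flatMap fun j =>
      (comps j.1).map (fun c => (n + 1 - j.1) :: c)
  decreasing_by exact List.mem_range.mp j.2

/-- All refinements `α ≼ λ` of a composition `λ`. -/
def refinements : List ℕ → List (List ℕ)
  | [] => [[]]
  | a :: l => (comps a).flatMap fun c => (refinements l).map (fun r => c ++ r)

/-- All compositions `α ⊆ λ`: `ℓ(α) = ℓ(λ)` and `1 ≤ α_i ≤ λ_i`. -/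
def boundedLists : List ℕ → List (List ℕ)
  | [] => [[]]
  | a :: l => (List.range a).flatMap fun j => (boundedLists l).map (fun r => (j + 1) :: r)

/-! ## Expansions of weighted graphs -/

/-- Given a decomposition `L` of `β` witnessing `β ≼ α`, vertex `a` of `H` is in the block
`R(v_v)` (0-based `v`) when `a` lies among the consecutively labelled vertices of block `v`. -/
def inBlock (L : List (List ℕ)) (v a : ℕ) : Prop :=
  ((L.take v).map List.length).sum ≤ a ∧ a < ((L.take (v + 1)).map List.length).sum

/-- The relation `a R b`: `a` and `b` lie in a common block `R(v)`. -/
def Rrel (L : List (List ℕ)) (a b : ℕ) : Prop :=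
  ∃ v : ℕ, inBlock L v a ∧ inBlock L v b

/-! ## The lattice of contractions and its Möbius function -/

/-- The restriction of the graph `E` to `B` is connected. -/
def ConnOn {V : Type*} (E : Multiset (Sym2 V)) (B : Set V) : Prop :=
  ∀ a ∈ B, ∀ b ∈ B, Relation.ReflTransGen (fun x y => x ∈ B ∧ y ∈ B ∧ s(x, y) ∈ E) a b

/-- A connected set partition of the graph `E` (as a setoid on the vertices). -/
def ConnPart {V : Type*} (E : Multiset (Sym2 V)) (σ : Setoid V) : Prop :=
  ∀ v : V, ConnOn E {u | σ.r u v}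

/-- The lattice of contractions `L_G`: connected set partitions ordered by refinement. -/
def LContr {V : Type*} (E : Multiset (Sym2 V)) : Type _ := {σ : Setoid V // ConnPart E σ}

noncomputable instance setoidFintype {V : Type*} [Fintype V] : Fintype (Setoid V) :=
  Fintype.ofInjective (fun s : Setoid V => s.r)
    (fun s t h => by cases s; cases t; simp only at h; subst h; rfl)

noncomputable instance {V : Type*} [Fintype V] (E : Multiset (Sym2 V)) : Fintype (LContr E) :=
  letI := Classical.decPred (ConnPart E)
  Subtype.fintype _

instance {V : Type*} (E : Multiset (Sym2 V)) : PartialOrder (LContr E) :=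
  Subtype.partialOrder _

noncomputable instance {V : Type*} [Fintype V] (E : Multiset (Sym2 V)) :
    LocallyFiniteOrder (LContr E) :=
  letI := Classical.decRel (α := LContr E) (· < ·)
  letI := Classical.decRel (α := LContr E) (· ≤ ·)
  Fintype.toLocallyFiniteOrder

/-- The Möbius function of the lattice of contractions. -/
noncomputable def mobLC {V : Type*} [Fintype V] (E : Multiset (Sym2 V))
    (x y : LContr E) : ℚ :=
  letI := Classical.decEq (LContr E)
  IncidenceAlgebra.mu ℚ x y

/-- `p_{type(π,w)}`: the product over the blocks of `π` of `p_{(total weight of block)}`. -/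
noncomputable def ptype {V : Type*} [Fintype V] (σ : Setoid V) (w : V → ℕ) :
    MvPowerSeries ℕ+ ℚ :=
  letI := Classical.decEq (Quotient σ)
  letI := @Quotient.fintype V _ σ (Classical.decRel _)
  ∏ c : Quotient σ, pS (∑ v : V, if Quotient.mk σ v = c then w v else 0)

/-- `0̂`, the minimal element of the lattice of contractions: each vertex is its own block. -/
def botLC {V : Type*} (E : Multiset (Sym2 V)) : LContr E :=
  ⟨⊥, by
    intro v a ha b hb
    have ha' : a = v := ha
    have hb' : b = v := hb
    subst ha'; subst hb'; exact Relation.ReflTransGen.refl⟩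

/-! ## Composition of a composition with a weighted graph -/

section comp
variable {V : Type*} [Fintype V]

/-- The gluing relation: for `i ∈ S` (1-based), identify the vertex `z` of copy `i`
with the vertex `a` of copy `i + 1` (0-based copies `i - 1` and `i`). -/
def glueRel (a z : V) (n : ℕ) (S : Finset ℕ) : (Fin n × V) → (Fin n × V) → Prop :=
  fun x y => ∃ i ∈ S, ∃ (h1 : i - 1 < n) (h2 : i < n),
    x = (⟨i - 1, h1⟩, z) ∧ y = (⟨i, h2⟩, a)

def glueSetoid (a z : V) (n : ℕ) (S : Finset ℕ) : Setoid (Fin n × V) :=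
  Relation.EqvGen.setoid (glueRel a z n S)

/-- Vertices of the graph obtained from `n` copies of a graph on `V` by contracting the
connecting edges `z_i a_{i+1}`, `i ∈ S`. -/
def compV (a z : V) (n : ℕ) (S : Finset ℕ) : Type _ := Quotient (glueSetoid a z n S)

noncomputable instance (a z : V) (n : ℕ) (S : Finset ℕ) : Fintype (compV a z n S) :=
  @Quotient.fintype _ _ (glueSetoid a z n S) (Classical.decRel _)

/-- Edges: all edges of the `n` copies of `E`, together with the connecting edges
`z_i a_{i+1}` for `i ∈ [n-1] − S` (the ones not contracted). -/
noncomputable def compE (E : Multiset (Sym2 V)) (a z : V) (n : ℕ) (S : Finset ℕ) :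
    Multiset (Sym2 (compV a z n S)) :=
  (∑ i : Fin n, E.map (Sym2.map fun v =>
      (Quotient.mk (glueSetoid a z n S) (i, v) : compV a z n S)))
  + ((Finset.Ioo 0 n \ S).attach.val.map fun i =>
      s((Quotient.mk (glueSetoid a z n S)
          (⟨i.1 - 1, by
            have := i.2; simp only [Finset.mem_sdiff, Finset.mem_Ioo] at this; omega⟩, z) :
            compV a z n S),
        (Quotient.mk (glueSetoid a z n S)
          (⟨i.1, by
            have := i.2; simp only [Finset.mem_sdiff, Finset.mem_Ioo] at this; omega⟩, a) :
            compV a z n S)))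

/-- Weights: a contracted vertex receives the sum of the weights of its constituents. -/
noncomputable def compW (w : V → ℕ) (a z : V) (n : ℕ) (S : Finset ℕ) :
    compV a z n S → ℕ :=
  fun c => ∑ x : Fin n × V,
    if (Quotient.mk (glueSetoid a z n S) x : compV a z n S) = c then w x.2 else 0

/-- `X_{α ∘ (G,w)}`: take `|α|` copies of `(G,w)`, join successive copies by edges
`z_i a_{i+1}`, and contract exactly the connecting edges with `i ∈ set(α^c)`. -/
noncomputable def Xcomp (E : Multiset (Sym2 V)) (w : V → ℕ) (a z : V) (α : List ℕ) :
    MvPowerSeries ℕ+ ℚ :=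
  X (compE E a z α.sum (Finset.Ioo 0 α.sum \ setC α))
    (compW w a z α.sum (Finset.Ioo 0 α.sum \ setC α))

end comp

/-! ### Auxiliary development for the main theorem -/

section Aux

/-- Add `a` to the head of a list (identity on `[]`). -/
def hAdd (a : ℕ) : List ℕ → List ℕ
  | [] => []
  | c :: t => (a + c) :: t

lemma coarsenings_cons (a : ℕ) (l : List ℕ) :
    coarsenings (a :: l) =
      (coarsenings l).map (fun β => a :: β) ++
        (coarsenings l).filterMap (fun β =>
          match β with
          | [] => none
          | b :: β' => some ((a + b) :: β')) := rfl

lemma coarsenings_ne_nil {α β : List ℕ} (hα : α ≠ []) (hβ : β ∈ coarsenings α) :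
    β ≠ [] := by
  cases α with
  | nil => exact absurd rfl hα
  | cons a l =>
    rw [coarsenings_cons, List.mem_append] at hβ
    rcases hβ with h | h
    · obtain ⟨γ, _, rfl⟩ := List.mem_map.1 h
      simp
    · obtain ⟨γ, _, hm⟩ := List.mem_filterMap.1 h
      match γ, hm with
      | b :: γ', hm =>
        simp only [Option.some.injEq] at hm
        rw [← hm]; simp

lemma coarsenings_length {α β : List ℕ} (hβ : β ∈ coarsenings α) :
    β.length ≤ α.length := by
  induction α generalizing β with
  | nil => simp [coarsenings] at hβ; simp [hβ]
  | cons a l ih =>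
    rw [coarsenings_cons, List.mem_append] at hβ
    rcases hβ with h | h
    · obtain ⟨γ, hγ, rfl⟩ := List.mem_map.1 h
      simpa using ih hγ
    · obtain ⟨γ, hγ, hm⟩ := List.mem_filterMap.1 h
      match γ, hm with
      | b :: γ', hm =>
        simp only [Option.some.injEq] at hm
        have := ih hγ
        rw [← hm]
        simp only [List.length_cons] at this ⊢
        omega

lemma coarsenings_headAdd (a b : ℕ) (l : List ℕ) :
    coarsenings ((a + b) :: l) = (coarsenings (b :: l)).map (hAdd a) := by
  rw [coarsenings_cons, coarsenings_cons, List.map_append, List.map_map,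
    List.map_filterMap]
  congr 1
  apply List.filterMap_congr
  intro β _
  match β with
  | [] => rfl
  | c :: t => simp [hAdd, add_assoc]

lemma filterMap_merge_eq (a : ℕ) {C : List (List ℕ)} (hC : ∀ β ∈ C, β ≠ []) :
    C.filterMap (fun β =>
        match β with
        | [] => none
        | b :: β' => some ((a + b) :: β')) = C.map (hAdd a) := by
  induction C with
  | nil => rfl
  | cons γ C ih =>
    have hγ : γ ≠ [] := hC γ (by simp)
    match γ, hγ with
    | c :: t, _ =>
      simp only [List.filterMap_cons, List.map_cons]
      rw [ih (fun β hβ => hC β (by simp [hβ]))]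
      rfl

lemma hAdd_length {a : ℕ} {β : List ℕ} (hβ : β ≠ []) : (hAdd a β).length = β.length := by
  match β, hβ with
  | c :: t, _ => rfl

/-- Product of `pS` over a list only depends on the multiset. -/
lemma pProd_sortDesc (l : List ℕ) : pProd (sortDesc l) = pProd l :=
  List.Perm.prod_eq (List.Perm.map pS (List.perm_insertionSort _ l))

/-- The right-hand side of the theorem, without sorting. -/
noncomputable def Rp (α : List ℕ) : MvPowerSeries ℕ+ ℚ :=
  ((coarsenings α).map fun β =>
    ((-1 : ℚ) ^ (α.length - β.length)) • pProd β).sum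

lemma pProd_cons (a : ℕ) (β : List ℕ) : pProd (a :: β) = pS a * pProd β := by
  simp [pProd]

lemma list_sum_map_mul {X : Type*} (c : MvPowerSeries ℕ+ ℚ)
    (f : X → MvPowerSeries ℕ+ ℚ) (L : List X) :
    (L.map fun x => c * f x).sum = c * (L.map f).sum := by
  induction L with
  | nil => simp
  | cons x L ih => simp [ih, mul_add]

lemma list_sum_map_neg {X : Type*}
    (f : X → MvPowerSeries ℕ+ ℚ) (L : List X) :
    (L.map fun x => -f x).sum = -(L.map f).sum := by
  induction L with
  | nil => simp
  | cons x L ih => simp [ih]; abel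

lemma Rp_rec (a b : ℕ) (l : List ℕ) :
    Rp (a :: b :: l) = pS a * Rp (b :: l) - Rp ((a + b) :: l) := by
  have hne : ∀ β ∈ coarsenings (b :: l), β ≠ [] :=
    fun β hβ => coarsenings_ne_nil (by simp) hβ
  have hlen : ∀ β ∈ coarsenings (b :: l), β.length ≤ l.length + 1 :=
    fun β hβ => by simpa using coarsenings_length hβ
  rw [Rp, coarsenings_cons, List.map_append, List.sum_append,
    filterMap_merge_eq a hne, List.map_map, List.map_map]
  have h1 : ((coarsenings (b :: l)).map
      ((fun β => ((-1 : ℚ) ^ ((a :: b :: l).length - β.length)) • pProd β) ∘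
        fun β => a :: β)).sum = pS a * Rp (b :: l) := by
    rw [Rp, ← list_sum_map_mul]
    apply congrArg
    apply List.map_congr_left
    intro β hβ
    have hβl := hlen β hβ
    simp only [Function.comp_apply, List.length_cons, pProd_cons]
    rw [mul_smul_comm]
    congr 2
    omega
  have h2 : ((coarsenings (b :: l)).map
      ((fun β => ((-1 : ℚ) ^ ((a :: b :: l).length - β.length)) • pProd β) ∘
        hAdd a)).sum = -Rp ((a + b) :: l) := by
    rw [Rp, coarsenings_headAdd, List.map_map, ← list_sum_map_neg]
    apply congrArg
    apply List.map_congr_left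
    intro β hβ
    have hβl := hlen β hβ
    have hβn := hne β hβ
    have h1l : 1 ≤ β.length := by
      cases β with
      | nil => exact absurd rfl hβn
      | cons c t => simp
    simp only [Function.comp_apply, List.length_cons, hAdd_length hβn]
    have : (a :: b :: l).length - (hAdd a β).length
        = ((a + b) :: l).length - β.length + 1 := by
      simp only [List.length_cons, hAdd_length hβn]
      omega
    simp only [List.length_cons] at this ⊢
    rw [show l.length + 1 + 1 - β.length = l.length + 1 - β.length + 1 by omega,
      pow_succ]
    simp [neg_smul]
  rw [h1, h2]
  ring

lemma mem_pathE {k : ℕ} (u v : Fin k) :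
    s(u, v) ∈ pathE k ↔ ((u : ℕ) + 1 = (v : ℕ) ∨ (v : ℕ) + 1 = (u : ℕ)) := by
  unfold pathE
  simp only [Multiset.mem_map, Finset.mem_val, Finset.mem_filter, Finset.mem_univ, true_and,
    Prod.exists]
  constructor
  · rintro ⟨x, y, hxy, hs⟩
    rw [Sym2.eq_iff] at hs
    rcases hs with ⟨rfl, rfl⟩ | ⟨rfl, rfl⟩
    · exact Or.inl hxy
    · exact Or.inr hxy
  · rintro (h | h)
    · exact ⟨u, v, h, rfl⟩
    · exact ⟨v, u, h, Sym2.eq_swap⟩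

lemma proper_pathE_iff {k : ℕ} (κ : Fin k → ℕ+) :
    Proper (pathE k) κ ↔
      ∀ (i : ℕ) (h : i + 1 < k), κ ⟨i, by omega⟩ ≠ κ ⟨i + 1, h⟩ := by
  constructor
  · intro hp i h
    exact hp _ _ ((mem_pathE _ _).2 (Or.inl rfl))
  · intro hp u v huv
    rcases (mem_pathE u v).1 huv with h | h
    · have h1 : (u : ℕ) + 1 < k := by rw [h]; exact v.isLt
      have := hp u.1 h1
      have hu : (⟨u.1, by omega⟩ : Fin k) = u := rfl
      have hv : (⟨(u : ℕ) + 1, h1⟩ : Fin k) = v := Fin.ext h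
      rwa [hu, hv] at this
    · have h1 : (v : ℕ) + 1 < k := by rw [h]; exact u.isLt
      have := hp v.1 h1
      have hv : (⟨v.1, by omega⟩ : Fin k) = v := rfl
      have hu : (⟨(v : ℕ) + 1, h1⟩ : Fin k) = u := Fin.ext h
      rw [hv, hu] at this
      exact this.symm

lemma proper_cons {k : ℕ} (κ : Fin (k + 2) → ℕ+) :
    Proper (pathE (k + 2)) κ ↔ κ 0 ≠ κ 1 ∧ Proper (pathE (k + 1)) (κ ∘ Fin.succ) := by
  rw [proper_pathE_iff, proper_pathE_iff]
  constructor
  · intro h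
    refine ⟨h 0 (by omega), fun i hi => ?_⟩
    exact h (i + 1) (by omega)
  · rintro ⟨h0, h⟩ i hi
    match i with
    | 0 => exact h0
    | i + 1 => exact h i (by omega)

lemma mon_succ {k : ℕ} (w : Fin (k + 1) → ℕ) (κ : Fin (k + 1) → ℕ+) :
    mon w κ = Finsupp.single (κ 0) (w 0) + mon (w ∘ Fin.succ) (κ ∘ Fin.succ) :=
  Fin.sum_univ_succ _

lemma apply_mon_ge {k : ℕ} (w : Fin k → ℕ) (κ : Fin k → ℕ+) (v : Fin k) :
    w v ≤ mon w κ (κ v) := by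
  rw [mon, Finsupp.finset_sum_apply]
  have h1 : w v = (Finsupp.single (κ v) (w v)) (κ v) := by simp
  rw [h1]
  exact Finset.single_le_sum (f := fun u => (Finsupp.single (κ u) (w u)) (κ v))
    (fun u _ => Nat.zero_le _) (Finset.mem_univ v)

lemma finite_aux {k : ℕ} (w : Fin k → ℕ) (hw : ∀ v, 0 < w v)
    (P : (Fin k → ℕ+) → Prop) (m : ℕ+ →₀ ℕ) :
    Finite {κ : Fin k → ℕ+ // P κ ∧ mon w κ = m} := by
  have hsub : {κ : Fin k → ℕ+ | P κ ∧ mon w κ = m} ⊆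
      Set.univ.pi (fun _ : Fin k => (m.support : Set ℕ+)) := by
    rintro κ ⟨_, hm⟩ v _
    have := apply_mon_ge w κ v
    rw [hm] at this
    have : 0 < m (κ v) := lt_of_lt_of_le (hw v) this
    simpa [Finsupp.mem_support_iff] using this.ne'
  exact Set.Finite.to_subtype
    (Set.Finite.subset (Set.Finite.pi fun _ => (m.support).finite_toSet) hsub)

lemma get_pos {α : List ℕ} (hα : ∀ x ∈ α, 0 < x) (i : Fin α.length) : 0 < α.get i :=
  hα _ (by rw [show α.get i = α.get ⟨i.1, i.2⟩ from rfl]; exact α.get_mem ⟨i.1, i.2⟩)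

lemma nat_card_sigma' {ι : Type*} (s : Finset ι) (f : ι → Type*) [∀ i, Finite (f i)] :
    Nat.card (Σ j : {j // j ∈ s}, f j.1) = ∑ j ∈ s, Nat.card (f j) := by
  letI : ∀ j : {j // j ∈ s}, Fintype (f j.1) := fun j => Fintype.ofFinite _
  rw [Nat.card_eq_fintype_card, Fintype.card_sigma, ← Finset.sum_coe_sort s]
  exact Finset.sum_congr rfl fun j _ => (Nat.card_eq_fintype_card).symm

/-- Base case: a single vertex of weight `a`. -/
lemma Xwpath_single (a : ℕ) (ha : 0 < a) : Xwpath [a] = pS a := by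
  have hE : pathE 1 = 0 := by decide
  funext m
  have hmon : ∀ κ : Fin 1 → ℕ+, mon (fun i => ([a] : List ℕ).get i) κ =
      Finsupp.single (κ 0) a := fun κ => Fin.sum_univ_one _
  have he : {κ : Fin 1 → ℕ+ // Proper (pathE 1) κ ∧
        mon (fun i => ([a] : List ℕ).get i) κ = m} ≃
      {j : ℕ+ // Finsupp.single j a = m} :=
    { toFun := fun κ => ⟨κ.1 0, by rw [← hmon κ.1]; exact κ.2.2⟩
      invFun := fun j => ⟨fun _ => j.1, by
        refine ⟨fun u v hu => absurd hu (by rw [hE]; exact Multiset.notMem_zero _), ?_⟩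
        rw [hmon]; exact j.2⟩
      left_inv := fun κ => Subtype.ext (funext fun i => by
        have : i = 0 := Subsingleton.elim _ _
        rw [this])
      right_inv := fun j => rfl }
  show ((Nat.card {κ : Fin 1 → ℕ+ // Proper (pathE 1) κ ∧
      mon (fun i => ([a] : List ℕ).get i) κ = m} : ℕ) : ℚ) = pS a m
  rw [Nat.card_congr he]
  by_cases h : ∃ j : ℕ+, m = Finsupp.single j a
  · obtain ⟨j0, rfl⟩ := h
    haveI : Unique {j : ℕ+ // Finsupp.single j a = Finsupp.single j0 a} :=
      { default := ⟨j0, rfl⟩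
        uniq := fun j => Subtype.ext
          (Finsupp.single_left_injective ha.ne' j.2) }
    rw [Nat.card_unique]
    simp only [pS]
    rw [if_pos ⟨j0, rfl⟩]
    norm_num
  · haveI : IsEmpty {j : ℕ+ // Finsupp.single j a = m} :=
      ⟨fun j => h ⟨j.1, j.2.symm⟩⟩
    rw [Nat.card_of_isEmpty]
    simp only [pS]
    rw [if_neg h]
    norm_num

lemma choose_single {a : ℕ} (ha : 0 < a) {j : ℕ+}
    (h : ∃ j' : ℕ+, (Finsupp.single j a : ℕ+ →₀ ℕ) = Finsupp.single j' a) :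
    h.choose = j :=
  Finsupp.single_left_injective ha.ne' h.choose_spec.symm

lemma coeff_pS_mul (a : ℕ) (ha : 0 < a) (f : MvPowerSeries ℕ+ ℚ) (m : ℕ+ →₀ ℕ) :
    (pS a * f) m =
      ∑ j ∈ m.support.filter (fun j => a ≤ m j), f (m - Finsupp.single j a) := by
  rw [show (pS a * f) m = ∑ p ∈ Finset.HasAntidiagonal.antidiagonal m, pS a p.1 * f p.2 from
    MvPowerSeries.coeff_mul m _ _]
  rw [Finset.sum_congr rfl (g := fun p =>
      if ∃ j : ℕ+, p.1 = Finsupp.single j a then f p.2 else 0)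
    (fun p _ => by simp only [pS]; split_ifs <;> simp)]
  rw [← Finset.sum_filter]
  refine Finset.sum_bij'
    (i := fun p hp => ((Finset.mem_filter.1 hp).2).choose)
    (j := fun j _ => (Finsupp.single j a, m - Finsupp.single j a))
    ?_ ?_ ?_ ?_ ?_
  · rintro ⟨p1, p2⟩ hp
    have hpa := (Finset.mem_filter.1 hp).1
    obtain ⟨j, hj⟩ := (Finset.mem_filter.1 hp).2
    simp only at hj
    subst hj
    have hsum : Finsupp.single j a + p2 = m := Finset.HasAntidiagonal.mem_antidiagonal.1 hpa
    beta_reduce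
    rw [choose_single ha]
    have hle : a ≤ m j := by
      rw [← hsum]
      simp
    exact Finset.mem_filter.2 ⟨Finsupp.mem_support_iff.2 (by omega), hle⟩
  · intro j hj
    have hja := (Finset.mem_filter.1 hj).2
    refine Finset.mem_filter.2 ⟨Finset.HasAntidiagonal.mem_antidiagonal.2 ?_, ⟨j, rfl⟩⟩
    exact add_tsub_cancel_of_le (Finsupp.single_le_iff.2 hja)
  · rintro ⟨p1, p2⟩ hp
    have hpa := (Finset.mem_filter.1 hp).1
    obtain ⟨j, hj⟩ := (Finset.mem_filter.1 hp).2
    simp only at hj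
    subst hj
    have hsum : Finsupp.single j a + p2 = m := Finset.HasAntidiagonal.mem_antidiagonal.1 hpa
    beta_reduce
    rw [choose_single ha]
    have h2 : m - Finsupp.single j a = p2 := by
      rw [← hsum, add_tsub_cancel_left]
    rw [h2]
  · intro j hj
    exact choose_single ha _
  · rintro ⟨p1, p2⟩ hp
    have hpa := (Finset.mem_filter.1 hp).1
    obtain ⟨j, hj⟩ := (Finset.mem_filter.1 hp).2
    simp only at hj
    subst hj
    have hsum : Finsupp.single j a + p2 = m := Finset.HasAntidiagonal.mem_antidiagonal.1 hpa
    beta_reduce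
    rw [choose_single ha]
    have h2 : m - Finsupp.single j a = p2 := by
      rw [← hsum, add_tsub_cancel_left]
    simp only [h2]


/-- Number of proper colourings of the weighted path with a given monomial. -/
noncomputable def cnt (α : List ℕ) (m : ℕ+ →₀ ℕ) : ℕ :=
  Nat.card {κ : Fin α.length → ℕ+ // Proper (pathE α.length) κ ∧
    mon (fun i => α.get i) κ = m}

lemma Xwpath_apply (α : List ℕ) (m : ℕ+ →₀ ℕ) : Xwpath α m = (cnt α m : ℚ) := rfl

lemma mon_succ'' {k : ℕ} (w : Fin (k + 1) → ℕ) (κ : Fin (k + 1) → ℕ+) :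
    mon w κ = Finsupp.single (κ 0) (w 0) +
      mon (fun i : Fin k => w i.succ) (fun i : Fin k => κ i.succ) :=
  Fin.sum_univ_succ _

lemma cases_eta {k : ℕ} (κ : Fin (k + 1) → ℕ+) :
    (Fin.cases (κ 0) (fun i => κ i.succ) : ∀ _ : Fin (k + 1), ℕ+) = κ :=
  funext fun i => by induction i using Fin.cases <;> simp

lemma cnt_split (a b : ℕ) (l : List ℕ) (ha : 0 < a) (hb : 0 < b)
    (hl : ∀ x ∈ l, 0 < x) (m : ℕ+ →₀ ℕ) :
    ∑ j ∈ m.support.filter (fun j => a ≤ m j),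
        cnt (b :: l) (m - Finsupp.single j a)
      = cnt (a :: b :: l) m + cnt ((a + b) :: l) m := by
  have hmem2 : ∀ x ∈ (a :: b :: l), 0 < x := by
    intro x hx
    rcases List.mem_cons.1 hx with rfl | hx
    · exact ha
    rcases List.mem_cons.1 hx with rfl | hx
    exacts [hb, hl x hx]
  have hmem1 : ∀ x ∈ (b :: l), 0 < x := by
    intro x hx
    rcases List.mem_cons.1 hx with rfl | hx
    exacts [hb, hl x hx]
  have hmemc : ∀ x ∈ ((a + b) :: l), 0 < x := by
    intro x hx
    rcases List.mem_cons.1 hx with rfl | hx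
    exacts [by omega, hl x hx]
  set n := l.length with hn
  have hw2 : ∀ v : Fin (n + 2), 0 < (a :: b :: l).get v := fun v => get_pos hmem2 v
  have hw1 : ∀ v : Fin (n + 1), 0 < (b :: l).get v := fun v => get_pos hmem1 v
  have hwc : ∀ v : Fin (n + 1), 0 < ((a + b) :: l).get v := fun v => get_pos hmemc v
  haveI fB : Finite {κ : Fin (n + 2) → ℕ+ //
      Proper (pathE (n + 1)) (fun i => κ i.succ) ∧
      mon (fun i : Fin (n + 2) => (a :: b :: l).get i) κ = m} :=
    finite_aux _ hw2 _ m
  haveI fF : ∀ j : ℕ+, Finite {κ' : Fin (n + 1) → ℕ+ //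
      Proper (pathE (n + 1)) κ' ∧
      mon (fun i : Fin (n + 1) => (b :: l).get i) κ' = m - Finsupp.single j a} :=
    fun j => finite_aux _ hw1 _ _
  haveI fA : Finite {κ : Fin (n + 2) → ℕ+ // Proper (pathE (n + 2)) κ ∧
      mon (fun i : Fin (n + 2) => (a :: b :: l).get i) κ = m} :=
    finite_aux _ hw2 _ m
  haveI fC : Finite {κ' : Fin (n + 1) → ℕ+ // Proper (pathE (n + 1)) κ' ∧
      mon (fun i : Fin (n + 1) => ((a + b) :: l).get i) κ' = m} :=
    finite_aux _ hwc _ m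
  -- the gluing map
  have hG : ∀ (j : ℕ+), j ∈ m.support.filter (fun j => a ≤ m j) →
      ∀ (κ' : Fin (n + 1) → ℕ+), Proper (pathE (n + 1)) κ' →
      mon (fun i : Fin (n + 1) => (b :: l).get i) κ' = m - Finsupp.single j a →
      Proper (pathE (n + 1)) (fun i : Fin (n + 1) =>
          (Fin.cases j κ' : ∀ _ : Fin (n + 2), ℕ+) i.succ) ∧
        mon (fun i : Fin (n + 2) => (a :: b :: l).get i) (Fin.cases j κ') = m := by
    intro j hj κ' hκ'p hκ'm
    constructor
    · exact hκ'p
    · have e : mon (fun i : Fin (n + 2) => (a :: b :: l).get i) (Fin.cases j κ')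
          = Finsupp.single j a +
            mon (fun i : Fin (n + 1) => (b :: l).get i) κ' := mon_succ'' _ _
      rw [e, hκ'm]
      exact add_tsub_cancel_of_le
        (Finsupp.single_le_iff.2 (Finset.mem_filter.1 hj).2)
  have e1 : (Σ j : {j : ℕ+ // j ∈ m.support.filter (fun j => a ≤ m j)},
      {κ' : Fin (n + 1) → ℕ+ // Proper (pathE (n + 1)) κ' ∧
        mon (fun i : Fin (n + 1) => (b :: l).get i) κ' = m - Finsupp.single j.1 a}) ≃
      {κ : Fin (n + 2) → ℕ+ // Proper (pathE (n + 1)) (fun i => κ i.succ) ∧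
        mon (fun i : Fin (n + 2) => (a :: b :: l).get i) κ = m} := by
    refine Equiv.ofBijective (fun x => ⟨Fin.cases x.1.1 x.2.1,
      hG x.1.1 x.1.2 x.2.1 x.2.2.1 x.2.2.2⟩) ⟨?_, ?_⟩
    · rintro ⟨⟨j1, hj1⟩, ⟨κ1, hκ1⟩⟩ ⟨⟨j2, hj2⟩, ⟨κ2, hκ2⟩⟩ hxy
      have hv : (Fin.cases j1 κ1 : ∀ _ : Fin (n + 2), ℕ+) = Fin.cases j2 κ2 :=
        congrArg Subtype.val hxy
      have hj : j1 = j2 := congrFun hv 0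
      have hκ : κ1 = κ2 := funext fun i => congrFun hv i.succ
      subst hj; subst hκ
      rfl
    · rintro ⟨κ, hκp, hκm⟩
      have hjmem : κ 0 ∈ m.support.filter (fun j => a ≤ m j) := by
        have hge : a ≤ mon (fun i : Fin (n + 2) => (a :: b :: l).get i) κ (κ 0) :=
          apply_mon_ge (fun i : Fin (n + 2) => (a :: b :: l).get i) κ 0
        rw [hκm] at hge
        exact Finset.mem_filter.2 ⟨Finsupp.mem_support_iff.2 (by omega), hge⟩
      have hsplit : mon (fun i : Fin (n + 2) => (a :: b :: l).get i) κ
          = Finsupp.single (κ 0) a +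
            mon (fun i : Fin (n + 1) => (b :: l).get i) (fun i => κ i.succ) :=
        mon_succ'' _ _
      have hmon' : mon (fun i : Fin (n + 1) => (b :: l).get i) (fun i => κ i.succ)
          = m - Finsupp.single (κ 0) a := by
        apply eq_tsub_of_add_eq
        rw [add_comm, ← hsplit]
        exact hκm
      refine ⟨⟨⟨κ 0, hjmem⟩, ⟨fun i => κ i.succ, hκp, hmon'⟩⟩, ?_⟩
      exact Subtype.ext (cases_eta κ)
  -- split B by whether the first two colours agree
  have eA : {x : {κ : Fin (n + 2) → ℕ+ //
        Proper (pathE (n + 1)) (fun i => κ i.succ) ∧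
        mon (fun i : Fin (n + 2) => (a :: b :: l).get i) κ = m} // ¬ (x.1 0 = x.1 1)} ≃
      {κ : Fin (n + 2) → ℕ+ // Proper (pathE (n + 2)) κ ∧
        mon (fun i : Fin (n + 2) => (a :: b :: l).get i) κ = m} :=
    { toFun := fun x => ⟨x.1.1, (proper_cons x.1.1).2 ⟨x.2, x.1.2.1⟩, x.1.2.2⟩
      invFun := fun y => ⟨⟨y.1, ((proper_cons y.1).1 y.2.1).2, y.2.2⟩,
        ((proper_cons y.1).1 y.2.1).1⟩
      left_inv := fun x => rfl
      right_inv := fun y => rfl }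
  have hH : ∀ (κ' : Fin (n + 1) → ℕ+), Proper (pathE (n + 1)) κ' →
      mon (fun i : Fin (n + 1) => ((a + b) :: l).get i) κ' = m →
      Proper (pathE (n + 1)) (fun i : Fin (n + 1) =>
          (Fin.cases (κ' 0) κ' : ∀ _ : Fin (n + 2), ℕ+) i.succ) ∧
        mon (fun i : Fin (n + 2) => (a :: b :: l).get i) (Fin.cases (κ' 0) κ') = m := by
    intro κ' hp hm
    refine ⟨hp, ?_⟩
    have g1 : mon (fun i : Fin (n + 2) => (a :: b :: l).get i)
          (Fin.cases (κ' 0) κ')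
        = Finsupp.single (κ' 0) a +
          mon (fun i : Fin (n + 1) => (b :: l).get i) κ' := mon_succ'' _ _
    have g2 : mon (fun i : Fin (n + 1) => (b :: l).get i) κ'
        = Finsupp.single (κ' 0) b +
          mon (fun i : Fin n => l.get i) (fun i => κ' i.succ) := mon_succ'' _ _
    have g3 : mon (fun i : Fin (n + 1) => ((a + b) :: l).get i) κ'
        = Finsupp.single (κ' 0) (a + b) +
          mon (fun i : Fin n => l.get i) (fun i => κ' i.succ) := mon_succ'' _ _
    rw [g3, Finsupp.single_add, add_assoc] at hm
    rw [g1, g2]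
    exact hm
  have eC : {x : {κ : Fin (n + 2) → ℕ+ //
        Proper (pathE (n + 1)) (fun i => κ i.succ) ∧
        mon (fun i : Fin (n + 2) => (a :: b :: l).get i) κ = m} // x.1 0 = x.1 1} ≃
      {κ' : Fin (n + 1) → ℕ+ // Proper (pathE (n + 1)) κ' ∧
        mon (fun i : Fin (n + 1) => ((a + b) :: l).get i) κ' = m} :=
    { toFun := fun x => ⟨fun i => x.1.1 i.succ, x.1.2.1, by
        have hm := x.1.2.2
        have h2a : mon (fun i : Fin (n + 2) => (a :: b :: l).get i) x.1.1
            = Finsupp.single (x.1.1 0) a +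
              mon (fun i : Fin (n + 1) => (b :: l).get i) (fun i => x.1.1 i.succ) :=
          mon_succ'' _ _
        have h2b : mon (fun i : Fin (n + 1) => (b :: l).get i) (fun i => x.1.1 i.succ)
            = Finsupp.single (x.1.1 1) b +
              mon (fun i : Fin n => l.get i) (fun i => x.1.1 i.succ.succ) :=
          mon_succ'' _ _
        have h1 : mon (fun i : Fin (n + 1) => ((a + b) :: l).get i)
              (fun i => x.1.1 i.succ)
            = Finsupp.single (x.1.1 1) (a + b) +
              mon (fun i : Fin n => l.get i) (fun i => x.1.1 i.succ.succ) :=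
          mon_succ'' _ _
        rw [h2a, h2b, ← x.2] at hm
        rw [h1, Finsupp.single_add, ← x.2, add_assoc]
        exact hm⟩
      invFun := fun y => ⟨⟨Fin.cases (y.1 0) y.1, hH y.1 y.2.1 y.2.2⟩, by exact rfl⟩
      left_inv := fun x => Subtype.ext (Subtype.ext (funext fun i => by
        induction i using Fin.cases with
        | zero => exact x.2.symm
        | succ i => rfl))
      right_inv := fun y => by exact rfl }
  calc ∑ j ∈ m.support.filter (fun j => a ≤ m j),
        cnt (b :: l) (m - Finsupp.single j a)
      = Nat.card (Σ j : {j : ℕ+ // j ∈ m.support.filter (fun j => a ≤ m j)},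
          {κ' : Fin (n + 1) → ℕ+ // Proper (pathE (n + 1)) κ' ∧
            mon (fun i : Fin (n + 1) => (b :: l).get i) κ' =
              m - Finsupp.single j.1 a}) :=
        (nat_card_sigma' (m.support.filter (fun j => a ≤ m j))
          (fun j : ℕ+ => {κ' : Fin (n + 1) → ℕ+ // Proper (pathE (n + 1)) κ' ∧
            mon (fun i : Fin (n + 1) => (b :: l).get i) κ' =
              m - Finsupp.single j a})).symm
    _ = Nat.card {κ : Fin (n + 2) → ℕ+ //
          Proper (pathE (n + 1)) (fun i => κ i.succ) ∧
          mon (fun i : Fin (n + 2) => (a :: b :: l).get i) κ = m} :=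
        Nat.card_congr e1
    _ = cnt (a :: b :: l) m + cnt ((a + b) :: l) m := by
        rw [← Nat.card_congr (Equiv.sumCompl
          (fun x : {κ : Fin (n + 2) → ℕ+ //
            Proper (pathE (n + 1)) (fun i => κ i.succ) ∧
            mon (fun i : Fin (n + 2) => (a :: b :: l).get i) κ = m} =>
              x.1 0 = x.1 1)), Nat.card_sum,
          Nat.card_congr eA, Nat.card_congr eC]
        exact Nat.add_comm _ _

lemma Xwpath_step (a b : ℕ) (l : List ℕ) (ha : 0 < a) (hb : 0 < b)
    (hl : ∀ x ∈ l, 0 < x) :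
    Xwpath (a :: b :: l) = pS a * Xwpath (b :: l) - Xwpath ((a + b) :: l) := by
  funext m
  have hmul : (pS a * Xwpath (b :: l)) m =
      ∑ j ∈ m.support.filter (fun j => a ≤ m j),
        Xwpath (b :: l) (m - Finsupp.single j a) :=
    coeff_pS_mul a ha _ m
  have hsum := cnt_split a b l ha hb hl m
  have hLHS : Xwpath (a :: b :: l) m = (cnt (a :: b :: l) m : ℚ) := rfl
  have hRHS : (pS a * Xwpath (b :: l) - Xwpath ((a + b) :: l)) m =
      (pS a * Xwpath (b :: l)) m - (cnt ((a + b) :: l) m : ℚ) := rfl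
  rw [hLHS, hRHS, hmul]
  have : ∑ j ∈ m.support.filter (fun j => a ≤ m j),
      Xwpath (b :: l) (m - Finsupp.single j a) =
      ∑ j ∈ m.support.filter (fun j => a ≤ m j),
        ((cnt (b :: l) (m - Finsupp.single j a) : ℕ) : ℚ) :=
    Finset.sum_congr rfl fun j _ => rfl
  rw [this, ← Nat.cast_sum, hsum]
  push_cast
  ring

end Aux

/-- **Power sum expansion of weighted paths.** For every nonempty composition `α`:
`X_{(P_{ℓ(α)},α)} = ∑_{β ≽ α} (-1)^{ℓ(α) - ℓ(β)} p_{β̃}`. -/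
theorem weighted_path_power_sum_expansion
    (α : List ℕ) (hα : α ≠ []) (hαpos : ∀ x ∈ α, 0 < x) :
    Xwpath α =
      ((coarsenings α).map fun β =>
        ((-1 : ℚ) ^ (α.length - β.length)) • pProd (sortDesc β)).sum := by
  have main : ∀ (k : ℕ) (α : List ℕ), α.length = k → α ≠ [] →
      (∀ x ∈ α, 0 < x) → Xwpath α = Rp α := by
    intro k
    induction k with
    | zero =>
      intro α h h0 _
      cases α with
      | nil => exact absurd rfl h0
      | cons a l => simp at h
    | succ k ih =>
      intro α hk hne hpos
      match α with
      | [] => exact absurd rfl hne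
      | [a] =>
        have ha : 0 < a := hpos a (by simp)
        have hc : coarsenings [a] = [[a]] := rfl
        rw [Xwpath_single a ha, Rp, hc]
        simp [pProd]
      | a :: b :: l =>
        have ha : 0 < a := hpos a (by simp)
        have hb : 0 < b := hpos b (by simp)
        have hl : ∀ x ∈ l, 0 < x := fun x hx => hpos x (by simp [hx])
        have hlen : l.length + 1 = k := by
          simp only [List.length_cons] at hk
          omega
        have h1 : Xwpath (b :: l) = Rp (b :: l) := by
          apply ih (b :: l) (by simpa using hlen) (by simp)
          intro x hx
          rcases List.mem_cons.1 hx with rfl | hx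
          exacts [hb, hl x hx]
        have h2 : Xwpath ((a + b) :: l) = Rp ((a + b) :: l) := by
          apply ih ((a + b) :: l) (by simpa using hlen) (by simp)
          intro x hx
          rcases List.mem_cons.1 hx with rfl | hx
          exacts [by omega, hl x hx]
        rw [Xwpath_step a b l ha hb hl, h1, h2]
        exact (Rp_rec a b l).symm
  rw [main α.length α rfl hα hαpos, Rp]
  apply congrArg
  apply List.map_congr_left
  intro β _
  rw [pProd_sortDesc]

end CSF
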